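/- For any finite 4-uniform hypergraph G, τ^{(3)}(G) ≤ (4/9)|D(G)|, where D(G) is the set of 3-element vertex subsets contained in at least one edge. -/

import Mathlib

variable {V : Type*} [DecidableEq V]

/-- `M` is an `m`-matching of `G`: a set of edges pairwise intersecting in fewer
than `m` vertices. -/
def IsMMatching (G : Finset (Finset V)) (m : ℕ) (M : Finset (Finset V)) : Prop :=
  M ⊆ G ∧ ∀ e ∈ M, ∀ f ∈ M, e ≠ f → (e ∩ f).card < m

/-- `C` is an `m`-cover of `G`: a family of `m`-element vertex sets such that every
edge of `G` contains a member of `C`. -/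
def IsMCover (G : Finset (Finset V)) (m : ℕ) (C : Finset (Finset V)) : Prop :=
  (∀ s ∈ C, s.card = m) ∧ ∀ e ∈ G, ∃ s ∈ C, s ⊆ e

/-- The `m`-matching number `ν^{(m)}(G)`. -/
noncomputable def nuM (G : Finset (Finset V)) (m : ℕ) : ℕ :=
  sSup {k | ∃ M, IsMMatching G m M ∧ M.card = k}

/-- The `m`-covering number `τ^{(m)}(G)`. -/
noncomputable def tauM (G : Finset (Finset V)) (m : ℕ) : ℕ :=
  sInf {k | ∃ C, IsMCover G m C ∧ C.card = k}

/-- `D(G)` (with parameter `m`): the `m`-element vertex subsets contained in at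
least one edge of `G`. -/
def Dset (G : Finset (Finset V)) (m : ℕ) : Finset (Finset V) :=
  G.biUnion fun e => e.powersetCard m

/-! ### Auxiliary definitions for the probabilistic (averaging) argument -/

/-- Number of occurrences of color `e` among `a, b, d`. -/
def cnt3 (a b d e : Fin 3) : ℕ :=
  (if a = e then 1 else 0) + (if b = e then 1 else 0) + (if d = e then 1 else 0)

/-- A good coloring pattern of a triple: monochromatic, or two of color `e`
and one of color `e + 1`. -/
def Q3 (a b d : Fin 3) : Prop :=
  (∃ e, cnt3 a b d e = 3) ∨ ∃ e, cnt3 a b d e = 2 ∧ cnt3 a b d (e + 1) = 1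

instance (a b d : Fin 3) : Decidable (Q3 a b d) := by unfold Q3; infer_instance

/-- Number of vertices of `t` colored `a` by `f`. -/
def cnt (f : V → Fin 3) (t : Finset V) (a : Fin 3) : ℕ :=
  (t.filter fun x => f x = a).card

/-- A good triple under coloring `f`. -/
def good (f : V → Fin 3) (t : Finset V) : Prop :=
  (∃ a, cnt f t a = 3) ∨ ∃ a, cnt f t a = 2 ∧ cnt f t (a + 1) = 1

lemma cnt_triple (f : V → Fin 3) {u v w : V} (huv : u ≠ v) (huw : u ≠ w) (hvw : v ≠ w)
    (e : Fin 3) : cnt f {u, v, w} e = cnt3 (f u) (f v) (f w) e := by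
  classical
  unfold cnt cnt3
  rw [Finset.card_filter]
  rw [Finset.sum_insert (by simp [huv, huw]), Finset.sum_insert (by simp [hvw]),
    Finset.sum_singleton]
  ring

lemma good_triple (f : V → Fin 3) {u v w : V} (huv : u ≠ v) (huw : u ≠ w) (hvw : v ≠ w) :
    good f {u, v, w} ↔ Q3 (f u) (f v) (f w) := by
  unfold good Q3
  simp_rw [cnt_triple f huv huw hvw]

/-- Counting colorings with three prescribed values. -/
lemma fiber_card {α : Type*} [Fintype α] [DecidableEq α] {x y z : α}
    (hxy : x ≠ y) (hxz : x ≠ z) (hyz : y ≠ z) (a b d : Fin 3) :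
    (Finset.univ.filter fun c : α → Fin 3 => c x = a ∧ c y = b ∧ c z = d).card * 27
      = 3 ^ Fintype.card α := by
  classical
  set S : α → Finset (Fin 3) :=
    fun i => if i = x then {a} else if i = y then {b} else if i = z then {d} else Finset.univ
    with hS
  have hset : (Finset.univ.filter fun c : α → Fin 3 => c x = a ∧ c y = b ∧ c z = d)
      = Fintype.piFinset S := by
    ext c
    simp only [Finset.mem_filter, Finset.mem_univ, true_and, Fintype.mem_piFinset, hS]
    constructor
    · rintro ⟨h1, h2, h3⟩ i
      by_cases hix : i = x
      · subst hix; simp [h1]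
      · by_cases hiy : i = y
        · subst hiy; simp [hix, h2]
        · by_cases hiz : i = z
          · subst hiz; simp [hix, hiy, h3]
          · simp [hix, hiy, hiz]
    · intro h
      refine ⟨?_, ?_, ?_⟩
      · have := h x; simpa using this
      · have := h y; simpa [hxy.symm] using this
      · have := h z; simpa [hxz.symm, hyz.symm] using this
  rw [hset, Fintype.card_piFinset]
  have hT : ({x, y, z} : Finset α).card = 3 := by
    rw [Finset.card_insert_of_notMem (by simp [hxy, hxz]),
      Finset.card_insert_of_notMem (by simp [hyz]), Finset.card_singleton]
  have hTsub : ({x, y, z} : Finset α) ⊆ Finset.univ := Finset.subset_univ _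
  have hn3 : 3 ≤ Fintype.card α := by
    have h := Finset.card_le_univ ({x, y, z} : Finset α)
    rw [hT] at h
    simpa using h
  have hprod : (∏ i, (S i).card) = (∏ i ∈ Finset.univ \ {x, y, z}, (S i).card)
      * ∏ i ∈ ({x, y, z} : Finset α), (S i).card := (Finset.prod_sdiff hTsub).symm
  have h1 : ∏ i ∈ ({x, y, z} : Finset α), (S i).card = 1 := by
    rw [Finset.prod_insert (by simp [hxy, hxz]), Finset.prod_insert (by simp [hyz]),
      Finset.prod_singleton]
    simp [hS, hxy.symm, hxz.symm, hyz.symm]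
  have h2 : ∏ i ∈ Finset.univ \ ({x, y, z} : Finset α), (S i).card
      = 3 ^ (Fintype.card α - 3) := by
    rw [Finset.prod_congr rfl (fun i hi => ?_), Finset.prod_const]
    · congr 1
      rw [Finset.card_sdiff_of_subset hTsub, hT, Finset.card_univ]
    · simp only [Finset.mem_sdiff, Finset.mem_insert, Finset.mem_singleton] at hi
      have hix : i ≠ x := fun h => hi.2 (Or.inl h)
      have hiy : i ≠ y := fun h => hi.2 (Or.inr (Or.inl h))
      have hiz : i ≠ z := fun h => hi.2 (Or.inr (Or.inr h))
      simp [hS, hix, hiy, hiz]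
  rw [hprod, h1, h2, mul_one]
  have : (27 : ℕ) = 3 ^ 3 := by norm_num
  rw [this, ← pow_add, Nat.sub_add_cancel hn3]

lemma Qcount :
    (Finset.univ.filter fun p : Fin 3 × Fin 3 × Fin 3 => Q3 p.1 p.2.1 p.2.2).card = 12 := by
  decide

/-- The per-triple counting bound: at most a 4/9-fraction of colorings make a
given triple good. -/
lemma count_le {α : Type*} [Fintype α] [DecidableEq α] {x y z : α}
    (hxy : x ≠ y) (hxz : x ≠ z) (hyz : y ≠ z) :
    (Finset.univ.filter fun c : α → Fin 3 => Q3 (c x) (c y) (c z)).card * 9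
      ≤ 4 * 3 ^ Fintype.card α := by
  classical
  set s := Finset.univ.filter fun c : α → Fin 3 => Q3 (c x) (c y) (c z) with hs
  set t := Finset.univ.filter fun p : Fin 3 × Fin 3 × Fin 3 => Q3 p.1 p.2.1 p.2.2 with ht
  have hmaps : ∀ c ∈ s, (c x, c y, c z) ∈ t := by
    intro c hc
    rw [hs, Finset.mem_filter] at hc
    rw [ht, Finset.mem_filter]
    exact ⟨Finset.mem_univ _, hc.2⟩
  have hcard := Finset.card_eq_sum_card_fiberwise hmaps
  have hfib : ∀ p ∈ t, (s.filter fun c => (c x, c y, c z) = p).card * 27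
      = 3 ^ Fintype.card α := by
    intro p hp
    rw [ht, Finset.mem_filter] at hp
    have : (s.filter fun c => (c x, c y, c z) = p)
        = Finset.univ.filter fun c : α → Fin 3 => c x = p.1 ∧ c y = p.2.1 ∧ c z = p.2.2 := by
      ext c
      rw [hs]
      simp only [Finset.mem_filter, Finset.mem_univ, true_and, Prod.ext_iff]
      constructor
      · rintro ⟨_, h1, h2, h3⟩; exact ⟨h1, h2, h3⟩
      · rintro ⟨h1, h2, h3⟩
        refine ⟨?_, h1, h2, h3⟩
        rw [h1, h2, h3]; exact hp.2
    rw [this]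
    exact fiber_card hxy hxz hyz _ _ _
  have hsum27 : s.card * 27 = t.card * 3 ^ Fintype.card α := by
    rw [hcard, Finset.sum_mul]
    rw [Finset.sum_congr rfl hfib, Finset.sum_const, smul_eq_mul]
  have htcard : t.card = 12 := by rw [ht]; exact Qcount
  rw [htcard] at hsum27
  clear hmaps hcard hfib htcard ht hs
  clear_value s t
  clear t
  generalize hK : (3 : ℕ) ^ Fintype.card α = K at hsum27 ⊢
  omega

theorem stmt5 (G : Finset (Finset V)) (hG : ∀ e ∈ G, e.card = 4) :
    (tauM G 3 : ℝ) ≤ (4 / 9 : ℝ) * ((Dset G 3).card : ℝ) := by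
  classical
  set W : Finset V := G.biUnion id with hW
  have hsubW : ∀ e ∈ G, e ⊆ W := by
    intro e he
    exact Finset.subset_biUnion_of_mem id he
  set extc : (↥W → Fin 3) → V → Fin 3 :=
    fun c v => if h : v ∈ W then c ⟨v, h⟩ else 0 with hextc
  set Cov : (↥W → Fin 3) → Finset (Finset V) :=
    fun c => (Dset G 3).filter fun t => good (extc c) t with hCov
  -- every Cov c is a 3-cover
  have hcov : ∀ c, IsMCover G 3 (Cov c) := by
    intro c
    constructor
    · intro s hs
      rw [hCov, Finset.mem_filter] at hs
      obtain ⟨e, he, hse⟩ := Finset.mem_biUnion.mp hs.1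
      exact (Finset.mem_powersetCard.mp hse).2
    · intro e he
      have hsum : cnt (extc c) e 0 + cnt (extc c) e 1 + cnt (extc c) e 2 = 4 := by
      -- fiberwise count
        have h4 := hG e he
        have := Finset.card_eq_sum_card_fiberwise
          (f := extc c) (s := e) (t := (Finset.univ : Finset (Fin 3)))
          (fun x _ => Finset.mem_univ _)
        rw [h4, Fin.sum_univ_three] at this
        exact this.symm
      have key : (∃ a, 3 ≤ cnt (extc c) e a)
          ∨ (∃ a, cnt (extc c) e a = 2 ∧ 1 ≤ cnt (extc c) e (a + 1)) := by
        have h01 : (0 : Fin 3) + 1 = 1 := rfl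
        have h12 : (1 : Fin 3) + 1 = 2 := rfl
        have h20 : (2 : Fin 3) + 1 = 0 := rfl
        set x := cnt (extc c) e 0 with hx
        set y := cnt (extc c) e 1 with hy
        set z := cnt (extc c) e 2 with hz
        have hcases : (3 ≤ x ∨ 3 ≤ y ∨ 3 ≤ z)
            ∨ ((x = 2 ∧ 1 ≤ y) ∨ (y = 2 ∧ 1 ≤ z) ∨ (z = 2 ∧ 1 ≤ x)) := by omega
        rcases hcases with (h | h | h) | (h | h | h)
        · exact Or.inl ⟨0, h⟩
        · exact Or.inl ⟨1, h⟩
        · exact Or.inl ⟨2, h⟩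
        · exact Or.inr ⟨0, h.1, by rw [h01]; exact h.2⟩
        · exact Or.inr ⟨1, h.1, by rw [h12]; exact h.2⟩
        · exact Or.inr ⟨2, h.1, by rw [h20]; exact h.2⟩
      rcases key with ⟨a, ha⟩ | ⟨a, ha2, ha1⟩
      · obtain ⟨t, hts, htc⟩ := Finset.exists_subset_card_eq (n := 3) ha
        have hte : t ⊆ e := hts.trans (Finset.filter_subset _ _)
        have htD : t ∈ Dset G 3 :=
          Finset.mem_biUnion.mpr ⟨e, he, Finset.mem_powersetCard.mpr ⟨hte, htc⟩⟩
        have hgood : good (extc c) t := by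
          left
          refine ⟨a, ?_⟩
          unfold cnt
          rw [Finset.filter_true_of_mem, htc]
          intro x hx
          exact (Finset.mem_filter.mp (hts hx)).2
        exact ⟨t, Finset.mem_filter.mpr ⟨htD, hgood⟩, hte⟩
      · obtain ⟨s1, hs1, hs1c⟩ := Finset.exists_subset_card_eq (n := 1) ha1
        have hne : ∀ b : Fin 3, b + 1 ≠ b := by decide
        unfold cnt at ha2 ha1
        set t := (e.filter fun x => extc c x = a) ∪ s1 with htdef
        have hdisj : Disjoint (e.filter fun x => extc c x = a) s1 := by
          rw [Finset.disjoint_left]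
          intro x hx1 hx2
          have h1 := (Finset.mem_filter.mp hx1).2
          have h2 := (Finset.mem_filter.mp (hs1 hx2)).2
          exact hne a (h2.symm.trans h1)
        have htc : t.card = 3 := by
          rw [htdef, Finset.card_union_of_disjoint hdisj, ha2, hs1c]
        have hte : t ⊆ e := by
          rw [htdef]
          exact Finset.union_subset (Finset.filter_subset _ _)
            (hs1.trans (Finset.filter_subset _ _))
        have htD : t ∈ Dset G 3 :=
          Finset.mem_biUnion.mpr ⟨e, he, Finset.mem_powersetCard.mpr ⟨hte, htc⟩⟩
        have hfa : t.filter (fun x => extc c x = a) = e.filter fun x => extc c x = a := by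
          rw [htdef, Finset.filter_union, Finset.filter_filter]
          have e1 : (e.filter fun x => extc c x = a ∧ extc c x = a)
              = e.filter fun x => extc c x = a := by
            apply Finset.filter_congr; intro x _; simp
          have e2 : s1.filter (fun x => extc c x = a) = ∅ := by
            rw [Finset.filter_eq_empty_iff]
            intro x hx
            have h2 := (Finset.mem_filter.mp (hs1 hx)).2
            rw [h2]
            exact hne a
          rw [e1, e2, Finset.union_empty]
        have hfa1 : t.filter (fun x => extc c x = a + 1) = s1 := by
          rw [htdef, Finset.filter_union, Finset.filter_filter]
          have e1 : (e.filter fun x => extc c x = a ∧ extc c x = a + 1) = ∅ := by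
            rw [Finset.filter_eq_empty_iff]
            intro x _
            rintro ⟨h1, h2⟩
            rw [h1] at h2
            exact hne a h2.symm
          have e2 : s1.filter (fun x => extc c x = a + 1) = s1 := by
            apply Finset.filter_true_of_mem
            intro x hx
            exact (Finset.mem_filter.mp (hs1 hx)).2
          rw [e1, e2, Finset.empty_union]
        have hgood : good (extc c) t := by
          right
          exact ⟨a, by unfold cnt; rw [hfa]; exact ha2, by unfold cnt; rw [hfa1]; exact hs1c⟩
        exact ⟨t, Finset.mem_filter.mpr ⟨htD, hgood⟩, hte⟩
  -- triples in Dset are triples inside W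
  have hDt : ∀ t ∈ Dset G 3, ∃ (u v w : V) (hu : u ∈ W) (hv : v ∈ W) (hw : w ∈ W),
      u ≠ v ∧ u ≠ w ∧ v ≠ w ∧ t = {u, v, w} := by
    intro t ht
    obtain ⟨e, he, hte⟩ := Finset.mem_biUnion.mp ht
    obtain ⟨hte', htc⟩ := Finset.mem_powersetCard.mp hte
    obtain ⟨u, v, w, huv, huw, hvw, rfl⟩ := Finset.card_eq_three.mp htc
    have hsub : ({u, v, w} : Finset V) ⊆ W := hte'.trans (hsubW e he)
    exact ⟨u, v, w, hsub (by simp), hsub (by simp), hsub (by simp), huv, huw, hvw, rfl⟩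
  -- per-triple counting bound
  have hper : ∀ t ∈ Dset G 3,
      (Finset.univ.filter fun c : ↥W → Fin 3 => good (extc c) t).card * 9
        ≤ 4 * 3 ^ Fintype.card ↥W := by
    intro t ht
    obtain ⟨u, v, w, hu, hv, hw, huv, huw, hvw, rfl⟩ := hDt t ht
    have hflt : (Finset.univ.filter fun c : ↥W → Fin 3 => good (extc c) {u, v, w})
        = Finset.univ.filter fun c : ↥W → Fin 3 =>
            Q3 (c ⟨u, hu⟩) (c ⟨v, hv⟩) (c ⟨w, hw⟩) := by
      apply Finset.filter_congr
      intro c _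
      have h1 : extc c u = c ⟨u, hu⟩ := dif_pos hu
      have h2 : extc c v = c ⟨v, hv⟩ := dif_pos hv
      have h3 : extc c w = c ⟨w, hw⟩ := dif_pos hw
      rw [good_triple (extc c) huv huw hvw, h1, h2, h3]
    rw [hflt]
    exact count_le (fun h => huv (congrArg Subtype.val h))
      (fun h => huw (congrArg Subtype.val h)) (fun h => hvw (congrArg Subtype.val h))
  -- sum over all colorings
  have hswap : ∑ c : ↥W → Fin 3, (Cov c).card
      = ∑ t ∈ Dset G 3,
          (Finset.univ.filter fun c : ↥W → Fin 3 => good (extc c) t).card := by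
    have : ∀ c : ↥W → Fin 3, (Cov c).card
        = ∑ t ∈ Dset G 3, if good (extc c) t then 1 else 0 := by
      intro c
      rw [hCov]
      exact Finset.card_filter _ _
    simp_rw [this]
    rw [Finset.sum_comm]
    refine Finset.sum_congr rfl fun t _ => ?_
    rw [Finset.card_filter]
  have hbound : (∑ c : ↥W → Fin 3, (Cov c).card) * 9
      ≤ (Dset G 3).card * (4 * 3 ^ Fintype.card ↥W) := by
    rw [hswap, Finset.sum_mul]
    calc ∑ t ∈ Dset G 3,
          (Finset.univ.filter fun c : ↥W → Fin 3 => good (extc c) t).card * 9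
        ≤ ∑ _t ∈ Dset G 3, 4 * 3 ^ Fintype.card ↥W := Finset.sum_le_sum hper
      _ = (Dset G 3).card * (4 * 3 ^ Fintype.card ↥W) := by
          rw [Finset.sum_const, smul_eq_mul]
  -- pigeonhole
  have hnen : Nonempty (↥W → Fin 3) := ⟨fun _ => 0⟩
  have huniv : (Finset.univ : Finset (↥W → Fin 3)).Nonempty := Finset.univ_nonempty
  have hsumle : ∑ c : ↥W → Fin 3, (Cov c).card * 9
      ≤ ∑ _c : ↥W → Fin 3, 4 * (Dset G 3).card := by
    rw [← Finset.sum_mul, Finset.sum_const, smul_eq_mul, Finset.card_univ,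
      Fintype.card_fun]
    calc (∑ c : ↥W → Fin 3, (Cov c).card) * 9
        ≤ (Dset G 3).card * (4 * 3 ^ Fintype.card ↥W) := hbound
      _ = Fintype.card (Fin 3) ^ Fintype.card ↥W * (4 * (Dset G 3).card) := by
          simp [Fintype.card_fin]; ring
  obtain ⟨c, _, hc⟩ := Finset.exists_le_of_sum_le huniv hsumle
  have htau : tauM G 3 ≤ (Cov c).card := Nat.sInf_le ⟨Cov c, hcov c, rfl⟩
  have h9 : ((Cov c).card : ℝ) * 9 ≤ 4 * ((Dset G 3).card : ℝ) := by exact_mod_cast hc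
  calc (tauM G 3 : ℝ) ≤ ((Cov c).card : ℝ) := by exact_mod_cast htau
    _ ≤ 4 / 9 * ((Dset G 3).card : ℝ) := by linarith
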